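/- arXiv:1904.00820 — 2 statements merged into one kernel-verified Lean document; each statement's English description precedes it below -/
import Mathlib

section
/- For a convex TU game, the marginal-contribution vector associated with any ordering of the players lies in the core: given a bijection π : Fin |N| → N, define x_{π(i)} = v({π(0),…,π(i)}) − v({π(0),…,π(i−1)}); then x is group rational and satisfies Σ_{n∈S} x_n ≥ v(S) for every coalition S. -/
set_option maxRecDepth 4000


/-- For a convex TU game, every marginal-contribution vector lies in the core. -/
theorem marginal_vector_in_core {N : Type*} [Fintype N] [DecidableEq N]
    (v : Finset N → ℝ) (h0 : v ∅ = 0)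
    (hconv : ∀ (n : N) (S1 S2 : Finset N), S1 ⊆ S2 → S2 ⊆ Finset.univ \ {n} →
      v (insert n S1) - v S1 ≤ v (insert n S2) - v S2)
    (π : Fin (Fintype.card N) ≃ N) (x : N → ℝ)
    (hx : ∀ n : N, x n = v ((Finset.Iic (π.symm n)).image π) -
                    v ((Finset.Iio (π.symm n)).image π)) :
    (∑ n, x n = v Finset.univ) ∧ (∀ S : Finset N, ∑ n ∈ S, x n ≥ v S) := by
  constructor
  · -- group rationality: telescoping sum
    set f : ℕ → ℝ := fun k =>
      v ((Finset.univ.filter (fun j : Fin (Fintype.card N) => (j : ℕ) < k)).image π) with hf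
    have hx' : ∀ i : Fin (Fintype.card N), x (π i) = f (i.val + 1) - f i.val := by
      intro i
      rw [hx, Equiv.symm_apply_apply]
      have h1 : Finset.Iic i = Finset.univ.filter (fun j : Fin (Fintype.card N) => (j : ℕ) < i.val + 1) := by
        ext j
        simp only [Finset.mem_Iic, Finset.mem_filter, Finset.mem_univ, true_and,
          Nat.lt_succ_iff, Fin.le_def]
      have h2 : Finset.Iio i = Finset.univ.filter (fun j : Fin (Fintype.card N) => (j : ℕ) < i.val) := by
        ext j
        simp only [Finset.mem_Iio, Finset.mem_filter, Finset.mem_univ, true_and, Fin.lt_def]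
      rw [h1, h2]
    have hsum : ∑ n, x n = ∑ i : Fin (Fintype.card N), x (π i) := (Equiv.sum_comp π x).symm
    rw [hsum]
    have : ∑ i : Fin (Fintype.card N), x (π i) = ∑ i : Fin (Fintype.card N), (f (i.val + 1) - f i.val) := by
      exact Finset.sum_congr rfl fun i _ => hx' i
    rw [this, Fin.sum_univ_eq_sum_range (fun k => f (k + 1) - f k), Finset.sum_range_sub]
    have hfc : f (Fintype.card N) = v Finset.univ := by
      have : (Finset.univ.filter (fun j : Fin (Fintype.card N) => (j : ℕ) < Fintype.card N)) = Finset.univ := by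
        ext j; simp [j.is_lt]
      simp [hf, this, Finset.image_univ_equiv]
    have hf0 : f 0 = 0 := by simp [hf, h0]
    rw [hfc, hf0, sub_zero]
  · -- coalitional rationality
    intro S
    induction S using Finset.strongInduction with
    | _ S ih =>
      rcases S.eq_empty_or_nonempty with rfl | hS
      · simp [h0]
      · obtain ⟨m, hm, hmax⟩ := S.exists_max_image (fun n => π.symm n) hS
        have hErsub : S.erase m ⊆ (Finset.Iio (π.symm m)).image π := by
          intro n hn
          rw [Finset.mem_erase] at hn
          refine Finset.mem_image.2 ⟨π.symm n, ?_, π.apply_symm_apply n⟩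
          rw [Finset.mem_Iio]
          exact lt_of_le_of_ne (hmax n hn.2) (fun h => hn.1 (π.symm.injective h))
        have hsub2 : (Finset.Iio (π.symm m)).image π ⊆ Finset.univ \ {m} := by
          intro n hn
          simp only [Finset.mem_sdiff, Finset.mem_univ, Finset.mem_singleton, true_and]
          obtain ⟨j, hj, rfl⟩ := Finset.mem_image.1 hn
          rw [Finset.mem_Iio] at hj
          intro h
          exact absurd (π.injective (h.trans (π.apply_symm_apply m).symm)) hj.ne
        have hcv := hconv m (S.erase m) ((Finset.Iio (π.symm m)).image π) hErsub hsub2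
        rw [Finset.insert_erase hm] at hcv
        have hins : insert m ((Finset.Iio (π.symm m)).image π)
            = (Finset.Iic (π.symm m)).image π := by
          rw [← Finset.Iio_insert, Finset.image_insert, π.apply_symm_apply]
        rw [hins] at hcv
        have hxm : x m ≥ v S - v (S.erase m) := by rw [hx m]; linarith
        have hih := ih (S.erase m) (Finset.erase_ssubset hm)
        have hsplit : ∑ n ∈ S, x n = x m + ∑ n ∈ S.erase m, x n :=
          (Finset.add_sum_erase S x hm).symm
        rw [hsplit]
        linarith
end

section
/- Every convex TU game has a non-empty core. -/
/-- Every convex TU game has a non-empty core. -/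
theorem convex_game_core_nonempty {N : Type*} [Fintype N] [DecidableEq N] [Nonempty N]
    (v : Finset N → ℝ) (h0 : v ∅ = 0)
    (hconv : ∀ (n : N) (S1 S2 : Finset N), S1 ⊆ S2 → S2 ⊆ Finset.univ \ {n} →
      v (insert n S1) - v S1 ≤ v (insert n S2) - v S2) :
    ∃ x : N → ℝ, (∑ n, x n = v Finset.univ) ∧ (∀ S : Finset N, ∑ n ∈ S, x n ≥ v S) := by
  classical
  set m := Fintype.card N with hm
  obtain ⟨e⟩ : Nonempty (N ≃ Fin m) := ⟨Fintype.equivFin N⟩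
  set Q : ℕ → Finset N := fun k => Finset.univ.filter (fun j => (e j : ℕ) < k) with hQ
  set x : N → ℝ := fun i => v (insert i (Q (e i))) - v (Q (e i)) with hx
  have hnotmem : ∀ i : N, i ∉ Q ((e i : ℕ)) := by
    intro i; simp [hQ]
  have hsubdiff : ∀ i : N, Q ((e i : ℕ)) ⊆ Finset.univ \ {i} := by
    intro i j hj
    simp only [hQ, Finset.mem_filter] at hj
    simp only [Finset.mem_sdiff, Finset.mem_univ, Finset.mem_singleton, true_and]
    intro h; subst h; omega
  have hins : ∀ i : N, insert i (Q ((e i : ℕ))) = Q ((e i : ℕ) + 1) := by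
    intro i
    ext j
    simp only [Finset.mem_insert, hQ, Finset.mem_filter, Finset.mem_univ, true_and,
      Nat.lt_succ_iff]
    constructor
    · rintro (rfl | h)
      · exact le_refl _
      · exact h.le
    · intro h
      rcases eq_or_lt_of_le h with h | h
      · exact Or.inl (e.injective (Fin.ext h))
      · exact Or.inr h
  have hQtele : ∀ k, ∑ j ∈ Q k, x j = v (Q k) := by
    intro k
    induction k with
    | zero => simp [hQ, h0]
    | succ k ih =>
      by_cases hk : k < m
      · have hek : (e (e.symm ⟨k, hk⟩) : ℕ) = k := by simp
        have hQk : Q (k + 1) = insert (e.symm ⟨k, hk⟩) (Q k) := by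
          have h := hins (e.symm ⟨k, hk⟩)
          rw [hek] at h
          exact h.symm
        have hxval : x (e.symm ⟨k, hk⟩) = v (Q (k + 1)) - v (Q k) := by
          show v _ - v _ = _
          rw [hek, ← hQk]
        have hnm : e.symm ⟨k, hk⟩ ∉ Q k := by
          have := hnotmem (e.symm ⟨k, hk⟩)
          rwa [hek] at this
        rw [hQk, Finset.sum_insert hnm, ih, ← hQk, hxval]
        ring
      · have hQk : Q (k + 1) = Q k := by
          ext j
          simp only [hQ, Finset.mem_filter, Finset.mem_univ, true_and]
          have := (e j).isLt
          omega
        rw [hQk, ih]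
  have hQn : Q m = Finset.univ := by
    ext j; simp [hQ, (e j).isLt]
  have hsum : ∑ i, x i = v Finset.univ := by
    rw [← hQn, hQtele]
  have hineq : ∀ S : Finset N, v S ≤ ∑ i ∈ S, x i := by
    intro S
    induction S using Finset.strongInduction with
    | _ S ih =>
      rcases S.eq_empty_or_nonempty with rfl | hS
      · simp [h0]
      · obtain ⟨i, hiS, hmax⟩ := S.exists_max_image (fun j => ((e j : ℕ))) hS
        set S' := S.erase i with hS'
        have hS'sub : S' ⊆ Q ((e i : ℕ)) := by
          intro j hj
          rcases Finset.mem_erase.mp hj with ⟨hji, hjS⟩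
          simp only [hQ, Finset.mem_filter, Finset.mem_univ, true_and]
          have h1 := hmax j hjS
          have h2 : (e j : ℕ) ≠ (e i : ℕ) := fun h => hji (e.injective (Fin.ext h))
          omega
        have hconv' := hconv i S' (Q ((e i : ℕ))) hS'sub (hsubdiff i)
        have hSins : S = insert i S' := (Finset.insert_erase hiS).symm
        have h1 : v (insert i S') - v S' ≤ x i := hconv'
        have h2 : v S' ≤ ∑ j ∈ S', x j := ih S' (Finset.erase_ssubset hiS)
        rw [hSins, Finset.sum_insert (Finset.notMem_erase i S), ← hS']
        linarith
  exact ⟨x, hsum, fun S => hineq S⟩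
end
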